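/- In misère Partizan Kayles there exist positions G and H with G + H equivalent to 0 modulo the Kayles universe, yet o⁻(G) = R and o⁻(H) = P: namely G = S₁ (a strip of length 1) and H = S₂ (a strip of length 2). In particular, an invertible position of outcome R can have inverse of outcome P. -/

import Mathlib

/-- Add a strip of length `k` to a position (strips of length 0 are discarded). -/
def addStrip (m : Multiset ℕ) (k : ℕ) : Multiset ℕ := if k = 0 then m else k ::ₘ m

/-- Left removes one square from a strip of length `n ≥ 1`, leaving strips `i` and `n-1-i`. -/
def LeftMove (G G' : Multiset ℕ) : Prop :=
  ∃ n ∈ G, ∃ i, i + 1 ≤ n ∧ G' = addStrip (addStrip (G.erase n) i) (n - 1 - i)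

/-- Right removes two adjacent squares from a strip of length `n ≥ 2`, leaving `i` and `n-2-i`. -/
def RightMove (G G' : Multiset ℕ) : Prop :=
  ∃ n ∈ G, ∃ i, i + 2 ≤ n ∧ G' = addStrip (addStrip (G.erase n) i) (n - 2 - i)

mutual
  /-- Misère play: Left, to move, wins (a player unable to move wins). -/
  inductive LeftWinsMover : Multiset ℕ → Prop
    | cannot (G : Multiset ℕ) : (¬ ∃ G', LeftMove G G') → LeftWinsMover G
    | move (G G' : Multiset ℕ) : LeftMove G G' → LeftWinsWaiter G' → LeftWinsMover G
  /-- Misère play: Left wins with Right to move. -/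
  inductive LeftWinsWaiter : Multiset ℕ → Prop
    | intro (G : Multiset ℕ) : (∃ G', RightMove G G') →
        (∀ G', RightMove G G' → LeftWinsMover G') → LeftWinsWaiter G
end

inductive Outcome | L | N | P | R
  deriving DecidableEq

open Classical in
/-- The misère outcome `o⁻(G)`. -/
noncomputable def outcome (G : Multiset ℕ) : Outcome :=
  if LeftWinsMover G then (if LeftWinsWaiter G then Outcome.L else Outcome.N)
  else (if LeftWinsWaiter G then Outcome.P else Outcome.R)

/-- The partial order on outcomes: `L` greatest, `R` least, `N` and `P` incomparable. -/
def Outcome.le (a b : Outcome) : Prop := a = b ∨ a = Outcome.R ∨ b = Outcome.L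

/-- `pos k j` is the position `kS₁ + jS₂`. -/
def pos (k j : ℕ) : Multiset ℕ := Multiset.replicate k 1 + Multiset.replicate j 2

/-- The key invariant: `+1` for strips `≡1 (mod 3)`, `-1` for strips `≡2`, `0` otherwise. -/
def f3 (n : ℕ) : ℤ := if n % 3 = 1 then 1 else if n % 3 = 2 then -1 else 0

def val (X : Multiset ℕ) : ℤ := (X.map f3).sum

lemma f3_0 {n : ℕ} (h : n % 3 = 0) : f3 n = 0 := by simp [f3, h]
lemma f3_1 {n : ℕ} (h : n % 3 = 1) : f3 n = 1 := by simp [f3, h]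
lemma f3_2 {n : ℕ} (h : n % 3 = 2) : f3 n = -1 := by simp [f3, h]

lemma val_addStrip (m : Multiset ℕ) (k : ℕ) : val (addStrip m k) = val m + f3 k := by
  unfold addStrip val
  split_ifs with h
  · subst h; simp [f3_0 (n := 0) (by norm_num)]
  · simp [Multiset.map_cons, Multiset.sum_cons]; ring

lemma val_erase {m : Multiset ℕ} {n : ℕ} (h : n ∈ m) : val m = f3 n + val (m.erase n) := by
  conv_lhs => rw [← Multiset.cons_erase h]
  simp [val]

lemma sum_addStrip (m : Multiset ℕ) (k : ℕ) : (addStrip m k).sum = m.sum + k := by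
  unfold addStrip
  split_ifs with h
  · subst h; simp
  · simp [Nat.add_comm]

lemma sum_erase {m : Multiset ℕ} {n : ℕ} (h : n ∈ m) : (m.erase n).sum + n = m.sum := by
  conv_rhs => rw [← Multiset.cons_erase h]
  simp [Multiset.sum_cons, Nat.add_comm]

lemma left_delta (i j : ℕ) :
    f3 i + f3 j - f3 (i + j + 1) = -1 ∨ f3 i + f3 j - f3 (i + j + 1) = 2 := by
  unfold f3; split_ifs <;> omega

lemma right_delta (i j : ℕ) :
    f3 i + f3 j - f3 (i + j + 2) = 1 ∨ f3 i + f3 j - f3 (i + j + 2) = -2 := by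
  unfold f3; split_ifs <;> omega

lemma move_val {G : Multiset ℕ} {n : ℕ} (hn : n ∈ G) (i j : ℕ) :
    val (addStrip (addStrip (G.erase n) i) j) = val G - f3 n + f3 i + f3 j := by
  rw [val_addStrip, val_addStrip]
  have := val_erase hn
  omega

lemma move_sum {G : Multiset ℕ} {n : ℕ} (hn : n ∈ G) (i j : ℕ) :
    (addStrip (addStrip (G.erase n) i) j).sum + n = G.sum + i + j := by
  rw [sum_addStrip, sum_addStrip]
  have := sum_erase hn
  omega

lemma leftMove_delta {G G' : Multiset ℕ} (h : LeftMove G G') :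
    (val G' = val G - 1 ∨ val G' = val G + 2) ∧ G'.sum + 1 = G.sum := by
  obtain ⟨n, hn, i, hi, rfl⟩ := h
  have hj : i + (n - 1 - i) + 1 = n := by omega
  constructor
  · have hv := move_val hn i (n - 1 - i)
    have hd := left_delta i (n - 1 - i)
    rw [hj] at hd
    omega
  · have hs := move_sum hn i (n - 1 - i)
    omega

lemma rightMove_delta {G G' : Multiset ℕ} (h : RightMove G G') :
    (val G' = val G + 1 ∨ val G' = val G - 2) ∧ G'.sum + 2 = G.sum := by
  obtain ⟨n, hn, i, hi, rfl⟩ := h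
  have hj : i + (n - 2 - i) + 2 = n := by omega
  constructor
  · have hv := move_val hn i (n - 2 - i)
    have hd := right_delta i (n - 2 - i)
    rw [hj] at hd
    omega
  · have hs := move_sum hn i (n - 2 - i)
    omega

lemma val_nonpos {X : Multiset ℕ} (h : ∀ n ∈ X, n % 3 ≠ 1) : val X ≤ 0 := by
  induction X using Multiset.induction_on with
  | empty => simp [val]
  | cons a s ih =>
    have h1 : f3 a ≤ 0 := by
      have := h a (by simp)
      unfold f3; split_ifs <;> omega
    have h2 := ih (fun n hn => h n (by simp [hn]))
    have h3 : val (a ::ₘ s) = f3 a + val s := by simp [val]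
    omega

lemma exists_mod2_of_neg {X : Multiset ℕ} (h : val X < 0) : ∃ n ∈ X, n % 3 = 2 := by
  by_contra hc
  push_neg at hc
  have : (0 : ℤ) ≤ val X := by
    unfold val
    apply Multiset.sum_nonneg
    intro x hx
    obtain ⟨n, hn, rfl⟩ := Multiset.mem_map.1 hx
    have := hc n hn
    unfold f3; split_ifs <;> omega
  omega

/-- Left can always make a `-1` move on a strip that is not `0` or `2`. -/
lemma exists_left_dec {G : Multiset ℕ} {n : ℕ} (hn : n ∈ G) (h1 : 1 ≤ n) (h2 : n ≠ 2) :
    ∃ G', LeftMove G G' ∧ val G' = val G - 1 := by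
  have h3 : n % 3 = 0 ∨ n % 3 = 1 ∨ n % 3 = 2 := by omega
  rcases h3 with h3 | h3 | h3
  · refine ⟨_, ⟨n, hn, 0, by omega, rfl⟩, ?_⟩
    rw [move_val hn 0 (n - 1 - 0), f3_0 h3, f3_0 (by omega : (0:ℕ) % 3 = 0),
      f3_2 (by omega : (n - 1 - 0) % 3 = 2)]
    ring
  · refine ⟨_, ⟨n, hn, 0, by omega, rfl⟩, ?_⟩
    rw [move_val hn 0 (n - 1 - 0), f3_1 h3, f3_0 (by omega : (0:ℕ) % 3 = 0),
      f3_0 (by omega : (n - 1 - 0) % 3 = 0)]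
    ring
  · have h5 : 5 ≤ n := by omega
    refine ⟨_, ⟨n, hn, 2, by omega, rfl⟩, ?_⟩
    rw [move_val hn 2 (n - 1 - 2), f3_2 h3, f3_2 (by omega : (2:ℕ) % 3 = 2),
      f3_2 (by omega : (n - 1 - 2) % 3 = 2)]
    ring

/-- Left's move on a strip of length 2 gains `+2`. -/
lemma exists_left_two {G : Multiset ℕ} (hn : (2 : ℕ) ∈ G) :
    ∃ G', LeftMove G G' ∧ val G' = val G + 2 := by
  refine ⟨_, ⟨2, hn, 0, by omega, rfl⟩, ?_⟩
  rw [move_val hn 0 (2 - 1 - 0), f3_2 (by omega : (2:ℕ) % 3 = 2),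
    f3_0 (by omega : (0:ℕ) % 3 = 0), f3_1 (by omega : (2 - 1 - 0) % 3 = 1)]
  ring

/-- Right can always make a `+1` move on any strip of length `≥ 2`. -/
lemma exists_right_inc {G : Multiset ℕ} {n : ℕ} (hn : n ∈ G) (h2 : 2 ≤ n) :
    ∃ G', RightMove G G' ∧ val G' = val G + 1 := by
  have h3 : n % 3 = 0 ∨ n % 3 = 1 ∨ n % 3 = 2 := by omega
  rcases h3 with h3 | h3 | h3
  · refine ⟨_, ⟨n, hn, 0, by omega, rfl⟩, ?_⟩
    rw [move_val hn 0 (n - 2 - 0), f3_0 h3, f3_0 (by omega : (0:ℕ) % 3 = 0),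
      f3_1 (by omega : (n - 2 - 0) % 3 = 1)]
    ring
  · have h4 : 4 ≤ n := by omega
    refine ⟨_, ⟨n, hn, 1, by omega, rfl⟩, ?_⟩
    rw [move_val hn 1 (n - 2 - 1), f3_1 h3, f3_1 (by omega : (1:ℕ) % 3 = 1),
      f3_1 (by omega : (n - 2 - 1) % 3 = 1)]
    ring
  · refine ⟨_, ⟨n, hn, 0, by omega, rfl⟩, ?_⟩
    rw [move_val hn 0 (n - 2 - 0), f3_2 h3, f3_0 (by omega : (0:ℕ) % 3 = 0),
      f3_0 (by omega : (n - 2 - 0) % 3 = 0)]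
    ring

/-- The complete outcome classification for misère Partizan Kayles. -/
theorem kayles_main (k : ℕ) : ∀ X : Multiset ℕ, X.sum = k →
    (LeftWinsMover X ↔ (val X ≤ 0 ∧ val X % 3 = 0)) ∧
    (LeftWinsWaiter X ↔ (val X ≤ 0 ∧ val X % 3 = 2)) := by
  induction k using Nat.strong_induction_on with
  | _ k IH =>
    intro X hX
    constructor
    · constructor
      · intro h
        cases h with
        | cannot _ hno =>
          have hz : val X = 0 := by
            unfold val
            apply Multiset.sum_eq_zero
            intro x hx
            obtain ⟨n, hn, rfl⟩ := Multiset.mem_map.1 hx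
            by_cases h1 : 1 ≤ n
            · exact absurd ⟨_, ⟨n, hn, 0, by omega, rfl⟩⟩ hno
            · exact f3_0 (by omega)
          omega
        | move _ G' hmv hW =>
          obtain ⟨hd, hs⟩ := leftMove_delta hmv
          have hlt : G'.sum < k := by omega
          have hPP := ((IH G'.sum hlt G' rfl).2).1 hW
          omega
      · rintro ⟨hle, hmod⟩
        by_cases hex : ∃ n ∈ X, 1 ≤ n ∧ n ≠ 2
        · obtain ⟨n, hn, h1, h2⟩ := hex
          obtain ⟨G', hmv, hval⟩ := exists_left_dec hn h1 h2
          refine LeftWinsMover.move _ G' hmv ?_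
          obtain ⟨_, hs⟩ := leftMove_delta hmv
          exact ((IH G'.sum (by omega) G' rfl).2).2 ⟨by omega, by omega⟩
        · by_cases hex2 : ∃ n ∈ X, 1 ≤ n
          · obtain ⟨n, hn, h1⟩ := hex2
            push_neg at hex
            have hn2 : n = 2 := by
              by_contra h
              exact h ((hex n hn h1))
            subst hn2
            have hall : ∀ m ∈ X, m % 3 ≠ 1 := by
              intro m hm
              by_cases h1 : 1 ≤ m
              · have := hex m hm h1; omega
              · omega
            have hneg : val X ≤ -1 := by
              have h2 := val_erase hn
              have h3 : val (X.erase 2) ≤ 0 :=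
                val_nonpos (fun m hm => hall m (Multiset.mem_of_mem_erase hm))
              rw [f3_2 (by omega : (2:ℕ) % 3 = 2)] at h2
              omega
            obtain ⟨G', hmv, hval⟩ := exists_left_two hn
            refine LeftWinsMover.move _ G' hmv ?_
            obtain ⟨_, hs⟩ := leftMove_delta hmv
            exact ((IH G'.sum (by omega) G' rfl).2).2 ⟨by omega, by omega⟩
          · refine LeftWinsMover.cannot _ ?_
            rintro ⟨G', n, hn, i, hi, -⟩
            exact hex2 ⟨n, hn, by omega⟩
    · constructor
      · intro h
        cases h with
        | intro _ hex hall =>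
          obtain ⟨G₀, n, hn, i, hi, -⟩ := hex
          obtain ⟨G', hmv, hval⟩ := exists_right_inc hn (by omega)
          have hLM := hall G' hmv
          obtain ⟨_, hs⟩ := rightMove_delta hmv
          have hPN := ((IH G'.sum (by omega) G' rfl).1).1 hLM
          omega
      · rintro ⟨hle, hmod⟩
        have hneg : val X < 0 := by omega
        obtain ⟨n, hn, h2⟩ := exists_mod2_of_neg hneg
        refine LeftWinsWaiter.intro _ ⟨_, ⟨n, hn, 0, by omega, rfl⟩⟩ ?_
        intro G' hmv
        obtain ⟨hd, hs⟩ := rightMove_delta hmv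
        exact ((IH G'.sum (by omega) G' rfl).1).2 ⟨by omega, by omega⟩

lemma kayles_class (X : Multiset ℕ) :
    (LeftWinsMover X ↔ (val X ≤ 0 ∧ val X % 3 = 0)) ∧
    (LeftWinsWaiter X ↔ (val X ≤ 0 ∧ val X % 3 = 2)) :=
  kayles_main X.sum X rfl

lemma val_add (A B : Multiset ℕ) : val (A + B) = val A + val B := by
  simp [val]

theorem kayles_asymmetric_inverse_pair :
    outcome (pos 1 0) = Outcome.R ∧ outcome (pos 0 1) = Outcome.P ∧
    (∀ X : Multiset ℕ, 0 ∉ X → outcome (pos 1 1 + X) = outcome X) := by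
  have h10 : val (pos 1 0) = 1 := by simp [pos, val, f3]
  have h01 : val (pos 0 1) = -1 := by simp [pos, val, f3]
  have h11 : val (pos 1 1) = 0 := by simp [pos, val, f3]
  refine ⟨?_, ?_, ?_⟩
  · have hM := (kayles_class (pos 1 0)).1
    have hW := (kayles_class (pos 1 0)).2
    rw [h10] at hM hW
    unfold outcome
    rw [if_neg (by rw [hM]; omega), if_neg (by rw [hW]; omega)]
  · have hM := (kayles_class (pos 0 1)).1
    have hW := (kayles_class (pos 0 1)).2
    rw [h01] at hM hW
    unfold outcome
    rw [if_neg (by rw [hM]; omega), if_pos (by rw [hW]; omega)]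
  · intro X _
    have hv : val (pos 1 1 + X) = val X := by rw [val_add, h11]; ring
    have hM : LeftWinsMover (pos 1 1 + X) ↔ LeftWinsMover X := by
      rw [(kayles_class _).1, (kayles_class _).1, hv]
    have hW : LeftWinsWaiter (pos 1 1 + X) ↔ LeftWinsWaiter X := by
      rw [(kayles_class _).2, (kayles_class _).2, hv]
    simp only [outcome]
    rcases Classical.em (LeftWinsMover X) with h1 | h1 <;>
      rcases Classical.em (LeftWinsWaiter X) with h2 | h2
    · rw [if_pos (hM.mpr h1), if_pos h1, if_pos (hW.mpr h2), if_pos h2]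
    · rw [if_pos (hM.mpr h1), if_pos h1, if_neg (fun h => h2 (hW.mp h)), if_neg h2]
    · rw [if_neg (fun h => h1 (hM.mp h)), if_neg h1, if_pos (hW.mpr h2), if_pos h2]
    · rw [if_neg (fun h => h1 (hM.mp h)), if_neg h1, if_neg (fun h => h2 (hW.mp h)), if_neg h2]
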